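/- Let G be a d-regular finite simple graph of order n with d ≥ 1, let k be a positive integer and let f be a k-rainbow dominating function on G with weight w(f). With c the number of colored vertices and e₂ the number of edges with both endpoints colored, the inequality w(f) ≥ ((n − c)·k + 2e₂)/d holds (equivalently, d·w(f) ≥ (n − c)·k + 2e₂). -/

import Mathlib

open SimpleGraph Finset

/-- `f` is a `k`-rainbow dominating function on `G`: every vertex with empty color set
has, for each color, a neighbour carrying that color. -/
def IsKRDF {V : Type*} (G : SimpleGraph V) (k : ℕ) (f : V → Finset (Fin k)) : Prop :=
  ∀ v : V, f v = ∅ → ∀ i : Fin k, ∃ u : V, G.Adj v u ∧ i ∈ f u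

/-- The weight of a rainbow coloring function. -/
def rdfWeight {V : Type*} [Fintype V] {k : ℕ} (f : V → Finset (Fin k)) : ℕ :=
  ∑ v : V, (f v).card

/-- The `k`-rainbow domination number of `G`: the minimum weight of a `k`-RDF. -/
noncomputable def rainbowDomNum {V : Type*} [Fintype V] (G : SimpleGraph V) (k : ℕ) : ℕ :=
  sInf {w : ℕ | ∃ f : V → Finset (Fin k), IsKRDF G k f ∧ rdfWeight f = w}

/-- Number of colored vertices (`c`). -/
noncomputable def coloredCount {V : Type*} {k : ℕ} (f : V → Finset (Fin k)) : ℕ :=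
  {v : V | f v ≠ ∅}.ncard

/-- Number of non-colored vertices (`c₀`). -/
noncomputable def uncoloredCount {V : Type*} {k : ℕ} (f : V → Finset (Fin k)) : ℕ :=
  {v : V | f v = ∅}.ncard

/-- Number of edges with both endpoints non-colored (`e₀`). -/
noncomputable def e0Count {V : Type*} (G : SimpleGraph V) {k : ℕ}
    (f : V → Finset (Fin k)) : ℕ :=
  {e ∈ G.edgeSet | ∀ v ∈ e, f v = ∅}.ncard

/-- Number of edges with exactly one colored endpoint (`e₁`). -/
noncomputable def e1Count {V : Type*} (G : SimpleGraph V) {k : ℕ}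
    (f : V → Finset (Fin k)) : ℕ :=
  {e ∈ G.edgeSet | (∃ v ∈ e, f v = ∅) ∧ ∃ v ∈ e, f v ≠ ∅}.ncard

/-- Number of edges with both endpoints colored (`e₂`). -/
noncomputable def e2Count {V : Type*} (G : SimpleGraph V) {k : ℕ}
    (f : V → Finset (Fin k)) : ℕ :=
  {e ∈ G.edgeSet | ∀ v ∈ e, f v ≠ ∅}.ncard

/-- For a `d`-regular graph (`d ≥ 1`) of order `n` and a `k`-RDF `f`,
`w(f) ≥ ((n − c)·k + 2e₂)/d`, i.e. `d·w(f) ≥ (n − c)·k + 2e₂`. -/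
theorem stmt_4 {V : Type*} [Fintype V] (G : SimpleGraph V) [DecidableRel G.Adj]
    (d k : ℕ) (hd : 1 ≤ d) (hreg : G.IsRegularOfDegree d) (hk : 0 < k)
    (f : V → Finset (Fin k)) (hf : IsKRDF G k f) :
    ((Fintype.card V : ℤ) - coloredCount f) * k + 2 * e2Count G f
      ≤ (d : ℤ) * rdfWeight f := by
  classical
  -- the subgraph on colored vertices
  let H : SimpleGraph V :=
    { Adj := fun v u => G.Adj v u ∧ f v ≠ ∅ ∧ f u ≠ ∅
      symm := by constructor; rintro v u ⟨h, hv, hu⟩; exact ⟨h.symm, hu, hv⟩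
      loopless := by constructor; rintro v ⟨h, _⟩; exact G.irrefl h }
  haveI : DecidableRel H.Adj := fun a b =>
    inferInstanceAs (Decidable (G.Adj a b ∧ f a ≠ ∅ ∧ f b ≠ ∅))
  -- e2 = edges of H
  have he2 : e2Count G f = H.edgeFinset.card := by
    have hset : {e ∈ G.edgeSet | ∀ v ∈ e, f v ≠ ∅} = H.edgeSet := by
      ext e
      refine Sym2.ind (fun a b => ?_) e
      simp only [Set.mem_setOf_eq, SimpleGraph.mem_edgeSet, Sym2.mem_iff]
      constructor
      · rintro ⟨hab, h⟩
        exact ⟨hab, h a (Or.inl rfl), h b (Or.inr rfl)⟩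
      · rintro ⟨hab, ha, hb⟩
        refine ⟨hab, ?_⟩
        rintro v (rfl | rfl) <;> assumption
    rw [e2Count, hset, ← SimpleGraph.coe_edgeFinset, Set.ncard_coe_finset]
  -- handshake for H
  have hhs : ∑ v : V, H.degree v = 2 * H.edgeFinset.card :=
    SimpleGraph.sum_degrees_eq_twice_card_edges H
  -- degree of H is 0 at uncolored vertices
  have hdeg0 : ∀ v : V, f v = ∅ → H.degree v = 0 := by
    intro v hv
    rw [SimpleGraph.degree, Finset.card_eq_zero]
    ext u
    simp only [SimpleGraph.mem_neighborFinset, Finset.notMem_empty, iff_false]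
    rintro ⟨-, hv', -⟩; exact hv' hv
  -- per-vertex bound
  have hbound : ∀ v : V,
      (if f v = ∅ then k else 0) + H.degree v
        ≤ ∑ u ∈ G.neighborFinset v, (f u).card := by
    intro v
    by_cases hv : f v = ∅
    · rw [if_pos hv, hdeg0 v hv, Nat.add_zero]
      have hsub : (Finset.univ : Finset (Fin k))
          ⊆ (G.neighborFinset v).biUnion f := by
        intro i _
        obtain ⟨u, hu, hiu⟩ := hf v hv i
        exact Finset.mem_biUnion.2 ⟨u, (G.mem_neighborFinset v u).2 hu, hiu⟩
      calc k = (Finset.univ : Finset (Fin k)).card := by simp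
        _ ≤ ((G.neighborFinset v).biUnion f).card := Finset.card_le_card hsub
        _ ≤ ∑ u ∈ G.neighborFinset v, (f u).card := Finset.card_biUnion_le
    · rw [if_neg hv, Nat.zero_add]
      have hsub : H.neighborFinset v ⊆ G.neighborFinset v := by
        intro u hu
        rw [SimpleGraph.mem_neighborFinset] at hu ⊢
        exact hu.1
      calc H.degree v = ∑ u ∈ H.neighborFinset v, 1 := by
            rw [Finset.sum_const, Nat.smul_one_eq_cast]; rfl
        _ ≤ ∑ u ∈ H.neighborFinset v, (f u).card := by
            refine Finset.sum_le_sum (fun u hu => ?_)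
            rw [SimpleGraph.mem_neighborFinset] at hu
            exact Finset.card_pos.2 (Finset.nonempty_iff_ne_empty.2 hu.2.2)
        _ ≤ ∑ u ∈ G.neighborFinset v, (f u).card :=
            Finset.sum_le_sum_of_subset hsub
  -- double counting
  have hswap : ∑ v : V, ∑ u ∈ G.neighborFinset v, (f u).card
      = d * rdfWeight f := by
    have : ∀ v : V, ∑ u ∈ G.neighborFinset v, (f u).card
        = ∑ u : V, if G.Adj v u then (f u).card else 0 := by
      intro v
      rw [SimpleGraph.neighborFinset_eq_filter, Finset.sum_filter]
    simp_rw [this]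
    rw [Finset.sum_comm, rdfWeight, Finset.mul_sum]
    refine Finset.sum_congr rfl (fun u _ => ?_)
    rw [← Finset.sum_filter, Finset.sum_const, smul_eq_mul]
    congr 1
    rw [← hreg u, SimpleGraph.degree, SimpleGraph.neighborFinset_eq_filter]
    congr 1
    ext v
    simp [SimpleGraph.adj_comm]
  -- counts
  have hunc : {v : V | f v = ∅}.ncard
      = (Finset.univ.filter (fun v => f v = ∅)).card := by
    rw [show {v : V | f v = ∅} = ↑(Finset.univ.filter (fun v => f v = ∅)) by
      ext v; simp, Set.ncard_coe_finset]
  have hcol : coloredCount f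
      = (Finset.univ.filter (fun v => ¬ f v = ∅)).card := by
    rw [coloredCount, show {v : V | f v ≠ ∅}
        = ↑(Finset.univ.filter (fun v => ¬ f v = ∅)) by ext v; simp,
      Set.ncard_coe_finset]
  have hsplit : (Finset.univ.filter (fun v => f v = ∅)).card + coloredCount f
      = Fintype.card V := by
    rw [hcol, Fintype.card]
    exact Finset.card_filter_add_card_filter_not _
  -- main nat inequality
  have hmain : (Finset.univ.filter (fun v => f v = ∅)).card * k
      + 2 * e2Count G f ≤ d * rdfWeight f := by
    have h1 : (Finset.univ.filter (fun v => f v = ∅)).card * k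
        = ∑ v : V, if f v = ∅ then k else 0 := by
      rw [← Finset.sum_filter, Finset.sum_const, smul_eq_mul]
    rw [h1, he2, ← hhs, ← Finset.sum_add_distrib, ← hswap]
    exact Finset.sum_le_sum (fun v _ => hbound v)
  -- conclude over ℤ
  have hn : ((Fintype.card V : ℤ) - coloredCount f)
      = ((Finset.univ.filter (fun v => f v = ∅)).card : ℤ) := by
    have := hsplit
    omega
  rw [hn]
  exact_mod_cast hmain
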